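/- Consider the coupled linear system u' = c e^{−ar} u + c e^{(2−a)r} v + c e^{(4−a)r}, v' = c e^{−2r} u + c e^{−ar} v + c e^{(1−a)r} on [r₀, ∞), with c > 0 and 1 < a < 2. Then every solution satisfies u = O(e^{(4−a)r}) and v = O(e^{(2−a)r}). -/

import Mathlib

set_option maxHeartbeats 1000000
open Real

open Real

lemma key_quad (β c l U V p q : ℝ) (hβ : 0 < β) (hβ1 : β ≤ 1) (hc : 0 < c)
    (hl1 : 1 ≤ l) (hcl : c^2 ≤ l*β) (hp : 0 ≤ p) (hpe : 8*(l+2)*p ≤ β)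
    (hq : 0 ≤ q) (hqc : q ≤ c) :
    2*l*U*((p-(β+2))*U + p*V + c) + 2*V*(c*U + (p-β)*V + q)
      ≤ -(β/4)*(l*U^2+V^2) + 4*l*(l+1) := by
  have hl0 : (0:ℝ) < l := lt_of_lt_of_le one_pos hl1
  have s1 : 2*l*p*(U*V) ≤ l*p*U^2 + l*p*V^2 := by
    nlinarith [mul_nonneg (mul_nonneg hl0.le hp) (sq_nonneg (U-V))]
  have s2 : 2*c*(U*V) ≤ (β/2)*V^2 + 2*l*U^2 := by
    nlinarith [sq_nonneg (β*V - 2*c*U), mul_le_mul_of_nonneg_right hcl (sq_nonneg U), hβ]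
  have s3 : 2*l*c*U ≤ (l*β/4)*U^2 + 4*l^2 := by
    nlinarith [mul_nonneg hl0.le (sq_nonneg (β*U - 4*c)), mul_le_mul_of_nonneg_left hcl hl0.le, hβ]
  have s4 : 2*q*V ≤ (β/4)*V^2 + 4*l := by
    nlinarith [sq_nonneg (β*V - 4*q), hβ, mul_le_mul_of_nonneg_left hcl (by norm_num : (0:ℝ) ≤ 1),
      sq_nonneg q, mul_le_mul hqc hqc hq hc.le]
  have s5 : 3*(l*p*U^2) ≤ (β/8)*(l*U^2) := by
    nlinarith [mul_nonneg (mul_nonneg hl0.le hp) (sq_nonneg U), mul_nonneg hl0.le (sq_nonneg U), hpe, hl1]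
  have s6 : (l+2)*p*V^2 ≤ (β/8)*V^2 := by
    nlinarith [mul_nonneg (mul_nonneg (by linarith : (0:ℝ) ≤ l+2) hp) (sq_nonneg V), sq_nonneg V]
  nlinarith [s1, s2, s3, s4, s5, s6, mul_nonneg hl0.le (sq_nonneg U),
    mul_nonneg (mul_nonneg hβ.le hl0.le) (sq_nonneg U), mul_nonneg hβ.le (sq_nonneg V), sq_nonneg V]


/-- Asymptotics for the second model system
`u' = c e^{-ar} u + c e^{(2-a)r} v + c e^{(4-a)r}`,
`v' = c e^{-2r} u + c e^{-ar} v + c e^{(1-a)r}` with `1 < a < 2`: every solution satisfies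
`u = O(e^{(4-a)r})` and `v = O(e^{(2-a)r})`. -/
theorem model_system_second_derivatives
    (r₀ a c : ℝ) (ha : 1 < a) (ha2 : a < 2) (hc : 0 < c)
    (u v : ℝ → ℝ)
    (hu : ∀ r ≥ r₀, HasDerivAt u
      (c * exp (-a * r) * u r + c * exp ((2 - a) * r) * v r + c * exp ((4 - a) * r)) r)
    (hv : ∀ r ≥ r₀, HasDerivAt v
      (c * exp (-2 * r) * u r + c * exp (-a * r) * v r + c * exp ((1 - a) * r)) r) :
    (∃ C : ℝ, ∀ r ≥ r₀, |u r| ≤ C * exp ((4 - a) * r)) ∧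
    (∃ C : ℝ, ∀ r ≥ r₀, |v r| ≤ C * exp ((2 - a) * r)) := by
  -- basic constants
  set β : ℝ := 2 - a with hβdef
  have hβ0 : 0 < β := by simp only [hβdef]; linarith
  have hβ1 : β ≤ 1 := by simp only [hβdef]; linarith
  set l : ℝ := 1 + c^2/β with hldef
  have hl1 : 1 ≤ l := by
    have : 0 ≤ c^2/β := by positivity
    simp only [hldef]; linarith
  have hl0 : (0:ℝ) < l := lt_of_lt_of_le one_pos hl1
  have hcl : c^2 ≤ l*β := by
    have : l*β = β + c^2 := by rw [hldef]; field_simp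
    nlinarith
  set K : ℝ := β/4 with hKdef
  have hK0 : 0 < K := by positivity
  set M : ℝ := 4*l*(l+1) with hMdef
  have hM0 : 0 ≤ M := by positivity
  set ε : ℝ := β/(8*(l+2)) with hεdef
  have hε0 : 0 < ε := by
    have : (0:ℝ) < 8*(l+2) := by linarith
    positivity
  -- choose r₁
  set r₁ : ℝ := max (max r₀ 0) (-Real.log (ε/c) / a) with hr₁def
  have hr₁0 : r₀ ≤ r₁ := le_trans (le_max_left _ _) (le_max_left _ _)
  have hr₁pos : (0:ℝ) ≤ r₁ := le_trans (le_max_right _ _) (le_max_left _ _)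
  have hpbound : ∀ r ≥ r₁, c * exp (-a * r) ≤ ε := by
    intro r hr
    have hR : -Real.log (ε/c) / a ≤ r := le_trans (le_max_right _ _) hr
    have ha0 : 0 < a := by linarith
    have h1 : -Real.log (ε/c) ≤ a * r := by
      rw [div_le_iff₀ ha0] at hR; linarith [hR]
    have h2 : exp (-a * r) ≤ ε / c := by
      rw [show -a * r = -(a*r) by ring]
      calc exp (-(a*r)) ≤ exp (Real.log (ε/c)) := exp_le_exp.2 (by linarith)
        _ = ε / c := exp_log (by positivity)
    calc c * exp (-a*r) ≤ c * (ε/c) := by nlinarith [hc]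
      _ = ε := by field_simp
  -- rescaled functions
  set U : ℝ → ℝ := fun r => u r * exp (-(4 - a) * r) with hUdef
  set V : ℝ → ℝ := fun r => v r * exp (-(2 - a) * r) with hVdef
  have hU : ∀ r ≥ r₀, HasDerivAt U
      ((c * exp (-a * r) - (β + 2)) * U r + (c * exp (-a * r)) * V r + c) r := by
    intro r hr
    have h1 : HasDerivAt U _ r := (hu r hr).fun_mul (((hasDerivAt_id r).const_mul (-(4 - a))).exp)
    convert h1 using 1
    have e1 : exp ((2-a)*r) * exp (-(4-a)*r) = exp (-a*r) * exp (-(2-a)*r) := by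
      rw [← exp_add, ← exp_add]; congr 1; ring
    have e2 : exp ((4-a)*r) * exp (-(4-a)*r) = 1 := by
      rw [← exp_add, show (4-a)*r + -(4-a)*r = 0 by ring, exp_zero]
    try simp only [hUdef, hVdef, hβdef, id_eq]
    linear_combination (c * v r) * e1.symm + c * e2.symm
  have hV : ∀ r ≥ r₀, HasDerivAt V
      (c * U r + (c * exp (-a * r) - β) * V r + c * exp (-r)) r := by
    intro r hr
    have h1 : HasDerivAt V _ r := (hv r hr).fun_mul (((hasDerivAt_id r).const_mul (-(2 - a))).exp)
    convert h1 using 1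
    have e3 : exp (-2*r) * exp (-(2-a)*r) = exp (-(4-a)*r) := by
      rw [← exp_add]; congr 1; ring
    have e4 : exp ((1-a)*r) * exp (-(2-a)*r) = exp (-r) := by
      rw [← exp_add]; congr 1; ring
    try simp only [hUdef, hVdef, hβdef, id_eq]
    linear_combination (c * u r) * e3.symm + c * e4.symm
  -- energy
  set E : ℝ → ℝ := fun r => l * (U r)^2 + (V r)^2 with hEdef
  set E' : ℝ → ℝ := fun r =>
    l * (2 * U r * ((c * exp (-a * r) - (β + 2)) * U r + (c * exp (-a * r)) * V r + c))
      + 2 * V r * (c * U r + (c * exp (-a * r) - β) * V r + c * exp (-r)) with hE'def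
  have hE : ∀ r ≥ r₀, HasDerivAt E (E' r) r := by
    intro r hr
    have h1 : HasDerivAt (fun r => (U r)^2) (2 * U r * ((c * exp (-a * r) - (β + 2)) * U r + (c * exp (-a * r)) * V r + c)) r := by
      have := (hU r hr).fun_pow 2
      simpa using this
    have h2 : HasDerivAt (fun r => (V r)^2) (2 * V r * (c * U r + (c * exp (-a * r) - β) * V r + c * exp (-r))) r := by
      have := (hV r hr).fun_pow 2
      simpa using this
    exact (h1.const_mul l).add h2
  -- differential inequality on [r₁, ∞)
  have hEbound : ∀ r ≥ r₁, E' r ≤ -K * E r + M := by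
    intro r hr
    have hp0 : 0 ≤ c * exp (-a * r) := by positivity
    have hq0 : 0 ≤ c * exp (-r) := by positivity
    have hqc : c * exp (-r) ≤ c := by
      nlinarith [exp_le_one_iff.2 (by linarith [le_trans hr₁pos hr] : -r ≤ 0), exp_pos (-r)]
    have hpe : 8*(l+2)*(c * exp (-a*r)) ≤ β := by
      have h := hpbound r hr
      have h8 : (0:ℝ) < 8*(l+2) := by linarith
      rw [hεdef] at h
      rw [le_div_iff₀ h8] at h
      linarith [h]
    have := key_quad β c l (U r) (V r) (c * exp (-a*r)) (c * exp (-r))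
      hβ0 hβ1 hc hl1 hcl hp0 hpe hq0 hqc
    calc E' r = 2*l*(U r)*((c*exp (-a*r)-(β+2))*(U r) + (c*exp (-a*r))*(V r) + c)
          + 2*(V r)*(c*(U r) + (c*exp (-a*r)-β)*(V r) + c*exp (-r)) := by
            simp only [hE'def]; ring
      _ ≤ -(β/4)*(l*(U r)^2+(V r)^2) + 4*l*(l+1) := this
      _ = -K * E r + M := by simp only [hKdef, hMdef, hEdef]
  -- the Lyapunov function F is antitone on [r₁, ∞)
  set F : ℝ → ℝ := fun r => (E r - M/K) * exp (K * r) with hFdef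
  set F' : ℝ → ℝ := fun r => E' r * exp (K * r) + (E r - M/K) * (exp (K * r) * K) with hF'def
  have hF : ∀ r ≥ r₀, HasDerivAt F (F' r) r := by
    intro r hr
    have h1 : HasDerivAt F _ r := ((hE r hr).sub_const (M/K)).fun_mul (((hasDerivAt_id r).const_mul K).exp)
    simp only [hFdef, hF'def]
    convert h1 using 1
    try simp only [id_eq]
    ring
  have hanti : AntitoneOn F (Set.Ici r₁) := by
    apply antitoneOn_of_deriv_nonpos (convex_Ici r₁)
    · intro x hx
      exact ((hF x (le_trans hr₁0 hx)).differentiableAt).continuousAt.continuousWithinAt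
    · intro x hx
      rw [interior_Ici] at hx
      exact ((hF x (le_trans hr₁0 (le_of_lt hx))).differentiableAt).differentiableWithinAt
    · intro x hx
      rw [interior_Ici] at hx
      rw [(hF x (le_trans hr₁0 (le_of_lt hx))).deriv]
      have hb := hEbound x (le_of_lt hx)
      have hMK : (E x - M/K) * K = E x * K - M := by
        field_simp
      have : F' x = (E' x + E x * K - M) * exp (K * x) := by
        simp only [hF'def]; rw [show (E x - M/K) * (exp (K*x) * K) = ((E x - M/K) * K) * exp (K*x) by ring, hMK]; ring
      rw [this]
      have h2 : E' x + E x * K - M ≤ 0 := by nlinarith [hb]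
      exact mul_nonpos_of_nonpos_of_nonneg h2 (exp_pos _).le
  -- tail bound on E
  set B : ℝ := M/K + E r₁ with hBdef
  have hEr₁0 : 0 ≤ E r₁ := by simp only [hEdef]; positivity
  have hMK0 : 0 ≤ M/K := by positivity
  have hB0 : 0 ≤ B := by simp only [hBdef]; linarith
  have hEtail : ∀ r ≥ r₁, E r ≤ B := by
    intro r hr
    have h := hanti (Set.self_mem_Ici) hr hr
    simp only [hFdef] at h
    have ht : 0 < exp (K * r) := exp_pos _
    have hs : 0 < exp (K * r₁) := exp_pos _
    have hst : exp (K * r₁) ≤ exp (K * r) := exp_le_exp.2 (by nlinarith [hK0])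
    simp only [hBdef]
    rcases le_or_gt (E r₁) (M/K) with hcase | hcase
    · have h1 : (E r₁ - M/K) * exp (K * r₁) ≤ 0 :=
        mul_nonpos_of_nonpos_of_nonneg (by linarith) hs.le
      nlinarith [h, h1, ht]
    · have h1 : (E r₁ - M/K) * exp (K * r₁) ≤ (E r₁ - M/K) * exp (K * r) :=
        mul_le_mul_of_nonneg_left hst (by linarith)
      nlinarith [h, h1, ht]
  -- tail bounds on U and V
  have hUtail : ∀ r ≥ r₁, |U r| ≤ Real.sqrt B := by
    intro r hr
    have h1 : (U r)^2 ≤ B := by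
      have := hEtail r hr
      simp only [hEdef] at this
      nlinarith [sq_nonneg (V r), sq_nonneg (U r), hl1]
    calc |U r| = Real.sqrt ((U r)^2) := (Real.sqrt_sq_eq_abs _).symm
      _ ≤ Real.sqrt B := Real.sqrt_le_sqrt h1
  have hVtail : ∀ r ≥ r₁, |V r| ≤ Real.sqrt B := by
    intro r hr
    have h1 : (V r)^2 ≤ B := by
      have := hEtail r hr
      simp only [hEdef] at this
      nlinarith [sq_nonneg (U r), hl0]
    calc |V r| = Real.sqrt ((V r)^2) := (Real.sqrt_sq_eq_abs _).symm
      _ ≤ Real.sqrt B := Real.sqrt_le_sqrt h1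
  -- compact bounds
  obtain ⟨C₁, hC₁⟩ := (isCompact_Icc (a := r₀) (b := r₁)).exists_bound_of_continuousOn
    (fun x hx => ((hU x hx.1).differentiableAt).continuousAt.continuousWithinAt)
  obtain ⟨C₂, hC₂⟩ := (isCompact_Icc (a := r₀) (b := r₁)).exists_bound_of_continuousOn
    (fun x hx => ((hV x hx.1).differentiableAt).continuousAt.continuousWithinAt)
  -- conclude
  have habsU : ∀ r, |u r| = |U r| * exp ((4-a)*r) := by
    intro r
    have : u r = U r * exp ((4-a)*r) := by
      simp only [hUdef]
      rw [mul_assoc, ← exp_add, show -(4-a)*r + (4-a)*r = 0 by ring, exp_zero, mul_one]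
    rw [this, abs_mul, abs_of_pos (exp_pos _)]
  have habsV : ∀ r, |v r| = |V r| * exp ((2-a)*r) := by
    intro r
    have : v r = V r * exp ((2-a)*r) := by
      simp only [hVdef]
      rw [mul_assoc, ← exp_add, show -(2-a)*r + (2-a)*r = 0 by ring, exp_zero, mul_one]
    rw [this, abs_mul, abs_of_pos (exp_pos _)]
  constructor
  · refine ⟨max C₁ (Real.sqrt B), fun r hr => ?_⟩
    rw [habsU r]
    have hUb : |U r| ≤ max C₁ (Real.sqrt B) := by
      rcases le_or_gt r r₁ with h | h
      · exact le_trans (by simpa [Real.norm_eq_abs] using hC₁ r ⟨hr, h⟩) (le_max_left _ _)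
      · exact le_trans (hUtail r h.le) (le_max_right _ _)
    exact mul_le_mul_of_nonneg_right hUb (exp_pos _).le
  · refine ⟨max C₂ (Real.sqrt B), fun r hr => ?_⟩
    rw [habsV r]
    have hVb : |V r| ≤ max C₂ (Real.sqrt B) := by
      rcases le_or_gt r r₁ with h | h
      · exact le_trans (by simpa [Real.norm_eq_abs] using hC₂ r ⟨hr, h⟩) (le_max_left _ _)
      · exact le_trans (hVtail r h.le) (le_max_right _ _)
    exact mul_le_mul_of_nonneg_right hVb (exp_pos _).le
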